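/- For 0 < α ≤ 1, λ² > 1 and i ≥ 1 with λᵢ ≠ λ and μ := λᵢ² − λ² + 1 ≠ 0, let w(t) = (λ² − E_α((1−λ²)t^α))/(λ²−1). Then the convolution ∫₀^t w(τ)(t−τ)^{α−1} E_{α,α}(−λᵢ²(t−τ)^α) dτ equals μ^{−1}[ E_α((1−λ²)t^α)/(1−λ²)·(1−λ²) + λ² t^α E_{α,α+1}((1−λ²)t^α) − E_α(−λᵢ² t^α) − λ² t^α E_{α,α+1}(−λᵢ² t^α) ] (i.e., the closed form obtained by partial fractions of the Laplace transforms). -/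

import Mathlib

open Real intervalIntegral

/-- The two-parameter Mittag-Leffler function. -/
noncomputable def mlE (α β z : ℝ) : ℝ := ∑' k : ℕ, z ^ k / Real.Gamma (α * k + β)

lemma summable_of_block_ratio {f : ℕ → ℝ} (hf : ∀ n, 0 ≤ f n) {m : ℕ} (hm : 0 < m)
    {N : ℕ} (hN : ∀ k, N ≤ k → f (k + m) ≤ (1/2) * f k) : Summable f := by
  haveI : NeZero m := ⟨hm.ne'⟩
  rw [← (Nat.divModEquiv m).symm.summable_iff]
  have hfe : (f ∘ (Nat.divModEquiv m).symm) = fun p : ℕ × Fin m => f (p.1 * m + p.2) := rfl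
  rw [hfe]
  have key : ∀ i : Fin m, Summable (fun j : ℕ => f (j * m + i)) := by
    intro i
    apply summable_of_ratio_norm_eventually_le (r := 1/2) (by norm_num)
    filter_upwards [Filter.eventually_ge_atTop N] with j hj
    have h1 : (j+1) * m + (i:ℕ) = (j * m + i) + m := by ring
    rw [h1, Real.norm_of_nonneg (hf _), Real.norm_of_nonneg (hf _)]
    exact hN _ (le_trans hj (by nlinarith [i.2, Nat.one_le_iff_ne_zero.2 hm.ne']))
  rw [summable_prod_of_nonneg (fun p => hf _)]
  refine ⟨fun j => Summable.of_finite, ?_⟩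
  apply Summable.of_nonneg_of_le (fun j => tsum_nonneg (fun i => hf _))
    (fun j => le_of_eq (by rw [tsum_fintype]))
  exact summable_sum (fun i _ => key i)

lemma Gamma_growth {x s : ℝ} (hx : 1 ≤ x) (hs : 1 ≤ s) :
    x * Real.Gamma x ≤ Real.Gamma (x + s) := by
  have h1 : Real.Gamma (x + 1) = x * Real.Gamma x := Real.Gamma_add_one (by linarith)
  rw [← h1]
  rcases eq_or_lt_of_le hs with h | h
  · rw [← h]
  · exact le_of_lt (Real.Gamma_strictMonoOn_Ici (by simp; linarith) (by simp; linarith)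
      (by linarith))

/-- Master summability lemma for Mittag-Leffler-type series. -/
lemma summable_ml_master {α β : ℝ} (hα : 0 < α) (hβ : 0 < β) {M : ℝ} (hM : 0 ≤ M) :
    Summable (fun n : ℕ => ((n:ℝ)+1) * M^n / Real.Gamma (α*n+β)) := by
  set m : ℕ := ⌈1/α⌉₊ with hmdef
  have hm : 0 < m := Nat.ceil_pos.2 (by positivity)
  have hαm : 1 ≤ α * m := by
    have h := Nat.le_ceil (1/α)
    calc (1:ℝ) = α * (1/α) := by field_simp
    _ ≤ α * m := mul_le_mul_of_nonneg_left h hα.le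
  set C : ℝ := max 1 (2 * ((m:ℝ)+1) * M^m) with hCdef
  set N : ℕ := ⌈C/α⌉₊ with hNdef
  apply summable_of_block_ratio (f := fun n : ℕ => ((n:ℝ)+1) * M^n / Real.Gamma (α*n+β))
    (fun n => by positivity) hm (N := N)
  intro k hk
  have hxk : C ≤ α * k + β := by
    have h1 : C/α ≤ (N:ℝ) := Nat.le_ceil _
    rw [div_le_iff₀ hα] at h1
    have h2 : (N:ℝ) ≤ k := Nat.cast_le.2 hk
    nlinarith
  have hx1 : 1 ≤ α * k + β := le_trans (le_max_left _ _) hxk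
  have hC2 : 2 * ((m:ℝ)+1) * M^m ≤ α*k+β := le_trans (le_max_right _ _) hxk
  have hΓpos : (0:ℝ) < Real.Gamma (α*k+β) := Real.Gamma_pos_of_pos (by linarith)
  have hcast : α*((k+m:ℕ):ℝ)+β = (α*k+β) + α*m := by push_cast; ring
  rw [hcast]
  have hgrow : (α*k+β) * Real.Gamma (α*k+β) ≤ Real.Gamma ((α*k+β) + α*m) :=
    Gamma_growth hx1 hαm
  have hΓpos2 : (0:ℝ) < Real.Gamma ((α*k+β) + α*m) :=
    lt_of_lt_of_le (by nlinarith) hgrow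
  have hcast2 : (((k+m:ℕ)):ℝ) = (k:ℝ) + m := by push_cast; ring
  have hr : (1:ℝ)/2 * (((k:ℝ)+1) * M^k / Real.Gamma (α*k+β))
      = ((1/2) * (((k:ℝ)+1) * M^k)) / Real.Gamma (α*k+β) := by ring
  rw [hcast2, pow_add, hr, div_le_div_iff₀ hΓpos2 hΓpos]
  have hfmk : ((k:ℝ)+m+1) ≤ ((m:ℝ)+1)*((k:ℝ)+1) := by
    nlinarith [Nat.cast_nonneg (α := ℝ) k, Nat.cast_nonneg (α := ℝ) m]
  calc ((k:ℝ)+m+1) * (M^k * M^m) * Real.Gamma (α*k+β)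
      ≤ (((m:ℝ)+1) * M^m) * (((k:ℝ)+1) * M^k) * Real.Gamma (α*k+β) := by
        nlinarith [mul_le_mul_of_nonneg_right hfmk
          (mul_nonneg (mul_nonneg (pow_nonneg hM k) (pow_nonneg hM m)) hΓpos.le)]
    _ ≤ ((1/2)*(α*k+β)) * (((k:ℝ)+1) * M^k) * Real.Gamma (α*k+β) := by
        have h3 : (0:ℝ) ≤ (((k:ℝ)+1) * M^k) * Real.Gamma (α*k+β) := by positivity
        nlinarith
    _ = (1/2) * (((k:ℝ)+1) * M^k) * ((α*k+β) * Real.Gamma (α*k+β)) := by ring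
    _ ≤ (1/2) * (((k:ℝ)+1) * M^k) * Real.Gamma ((α*k+β) + α*m) :=
        mul_le_mul_of_nonneg_left hgrow (by positivity)
section P2
variable {α β : ℝ}

lemma summable_norm_mlE (hα : 0 < α) (hβ : 0 < β) (z : ℝ) :
    Summable (fun k : ℕ => ‖z ^ k / Real.Gamma (α * k + β)‖) := by
  apply Summable.of_nonneg_of_le (fun k => norm_nonneg _) _ (summable_ml_master hα hβ (abs_nonneg z))
  intro k
  have hΓ : (0:ℝ) < Real.Gamma (α*k+β) := Real.Gamma_pos_of_pos (by positivity)
  rw [Real.norm_eq_abs, abs_div, abs_of_pos hΓ, ← abs_pow, abs_pow]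
  gcongr
  nlinarith [pow_nonneg (abs_nonneg z) k, Nat.cast_nonneg (α := ℝ) k]

lemma summable_mlE (hα : 0 < α) (hβ : 0 < β) (z : ℝ) :
    Summable (fun k : ℕ => z ^ k / Real.Gamma (α * k + β)) :=
  Summable.of_norm (summable_norm_mlE hα hβ z)

lemma mlE_zero (hα : 0 < α) : mlE α 1 0 = 1 := by
  rw [mlE, tsum_eq_single 0]
  · norm_num [Real.Gamma_one]
  · intro k hk
    rw [zero_pow hk, zero_div]

lemma mlE_continuous (hα : 0 < α) (hβ : 0 < β) : Continuous (mlE α β) := by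
  rw [continuous_iff_continuousAt]
  intro x
  have hball : Metric.ball x (1 : ℝ) ∈ nhds x := Metric.ball_mem_nhds x one_pos
  have heq : mlE α β = fun z : ℝ => ∑' k : ℕ, z ^ k / Real.Gamma (α * k + β) := rfl
  rw [heq]
  have hcont : ContinuousOn (fun z : ℝ => ∑' k : ℕ, z ^ k / Real.Gamma (α * k + β))
      (Metric.ball x 1) := by
    refine continuousOn_tsum (f := fun (k : ℕ) (z : ℝ) => z ^ k / Real.Gamma (α * k + β))
      (u := fun k : ℕ => (|x|+1) ^ k / Real.Gamma (α * k + β)) ?_ ?_ ?_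
    · intro k; exact (continuous_pow k).continuousOn.div_const _
    · have := summable_norm_mlE hα hβ (|x|+1)
      apply this.congr
      intro k
      have hΓ : (0:ℝ) < Real.Gamma (α*k+β) := Real.Gamma_pos_of_pos (by positivity)
      rw [Real.norm_eq_abs, abs_div, abs_of_pos hΓ, abs_pow, abs_of_nonneg (by positivity)]
    · intro k z hz
      have hΓ : (0:ℝ) < Real.Gamma (α*k+β) := Real.Gamma_pos_of_pos (by positivity)
      rw [Real.norm_eq_abs, abs_div, abs_of_pos hΓ, abs_pow]
      have hz1 : |z| ≤ |x| + 1 := by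
        have h1 := mem_ball_iff_norm.1 hz
        rw [Real.norm_eq_abs] at h1
        calc |z| = |x + (z - x)| := by ring_nf
        _ ≤ |x| + |z - x| := abs_add_le _ _
        _ ≤ |x| + 1 := by linarith
      exact div_le_div₀ (by positivity) (pow_le_pow_left₀ (abs_nonneg z) hz1 k) hΓ le_rfl
  exact hcont.continuousAt hball

lemma mlE_shift (hα : 0 < α) (z : ℝ) : z * mlE α (α+1) z = mlE α 1 z - 1 := by
  have h1 : mlE α 1 z = 1 + ∑' k : ℕ, z ^ (k+1) / Real.Gamma (α * (k+1) + 1) := by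
    rw [mlE, Summable.tsum_eq_zero_add (summable_mlE hα one_pos z)]
    norm_num [Real.Gamma_one]
  rw [h1, mlE, ← tsum_mul_left]
  have : ∀ k : ℕ, z * (z ^ k / Real.Gamma (α * k + (α+1))) = z ^ (k+1) / Real.Gamma (α * (k+1) + 1) := by
    intro k
    rw [pow_succ]
    have : α * k + (α + 1) = α * (k+1) + 1 := by push_cast; ring
    rw [this]; ring
  rw [tsum_congr this]; ring
end P2
section P3

lemma beta_eval {p q : ℝ} (hp : 0 < p) (hq : 0 < q) :
    ∫ x in (0:ℝ)..1, x^(p-1) * (1-x)^(q-1) = Real.Gamma p * Real.Gamma q / Real.Gamma (p+q) := by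
  have hΓ : Complex.Gamma p * Complex.Gamma q
      = Complex.Gamma (p+q) * Complex.betaIntegral p q := by
    have := Complex.Gamma_mul_Gamma_eq_betaIntegral (s := (p:ℂ)) (t := (q:ℂ))
      (by simpa using hp) (by simpa using hq)
    exact_mod_cast this
  have h2 : Complex.betaIntegral p q = ((∫ x in (0:ℝ)..1, x^(p-1)*(1-x)^(q-1) : ℝ) : ℂ) := by
    rw [Complex.betaIntegral, ← intervalIntegral.integral_ofReal]
    apply intervalIntegral.integral_congr
    intro x hx
    rw [Set.uIcc_of_le (by norm_num : (0:ℝ) ≤ 1)] at hx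
    obtain ⟨hx0, hx1⟩ := hx
    dsimp only
    rw [Complex.ofReal_mul, Complex.ofReal_cpow hx0, Complex.ofReal_cpow (by linarith)]
    push_cast
    ring
  have hne : Complex.Gamma ((p:ℂ)+(q:ℂ)) ≠ 0 := by
    have : ((p:ℂ)+(q:ℂ)) = ((p+q : ℝ) : ℂ) := by push_cast; ring
    rw [this, Complex.Gamma_ofReal]
    simp only [ne_eq, Complex.ofReal_eq_zero]
    exact (Real.Gamma_pos_of_pos (by linarith)).ne'
  rw [h2] at hΓ
  have hre : ((Real.Gamma p * Real.Gamma q : ℝ) : ℂ)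
      = ((Real.Gamma (p+q) * ∫ x in (0:ℝ)..1, x^(p-1)*(1-x)^(q-1) : ℝ) : ℂ) := by
    push_cast
    rw [← Complex.Gamma_ofReal, ← Complex.Gamma_ofReal, ← Complex.Gamma_ofReal] at *
    convert hΓ using 2 <;> push_cast <;> ring
  have := Complex.ofReal_inj.1 hre
  have hΓpq : Real.Gamma (p+q) ≠ 0 := (Real.Gamma_pos_of_pos (by linarith)).ne'
  field_simp
  linarith [this]

lemma beta_scaled {p q t : ℝ} (hp : 0 < p) (hq : 0 < q) (ht : 0 < t) :
    ∫ τ in (0:ℝ)..t, τ^(p-1) * (t-τ)^(q-1)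
      = Real.Gamma p * Real.Gamma q / Real.Gamma (p+q) * t^(p+q-1) := by
  have h := intervalIntegral.integral_comp_mul_left (a := (0:ℝ)) (b := 1)
    (f := fun τ => τ^(p-1)*(t-τ)^(q-1)) ht.ne'
  simp only [mul_zero, mul_one, smul_eq_mul] at h
  -- h : ∫ x in 0..1, (t*x)^(p-1) * (t - t*x)^(q-1) = t⁻¹ * ∫ τ in 0..t, τ^(p-1)*(t-τ)^(q-1)
  have h1 : (∫ x in (0:ℝ)..1, (t*x)^(p-1) * (t - t*x)^(q-1))
      = t^(p-1) * t^(q-1) * ∫ x in (0:ℝ)..1, x^(p-1) * (1-x)^(q-1) := by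
    rw [← intervalIntegral.integral_const_mul]
    apply intervalIntegral.integral_congr
    intro x hx
    rw [Set.uIcc_of_le (by norm_num : (0:ℝ) ≤ 1)] at hx
    obtain ⟨hx0, hx1⟩ := hx
    dsimp only
    have e1 : (t*x)^(p-1) = t^(p-1) * x^(p-1) := Real.mul_rpow ht.le hx0
    have e2 : (t - t*x) = t * (1-x) := by ring
    have e3 : (t*(1-x))^(q-1) = t^(q-1) * (1-x)^(q-1) := Real.mul_rpow ht.le (by linarith)
    rw [e1, e2, e3]; ring
  rw [h1, beta_eval hp hq] at h
  rw [eq_comm, inv_mul_eq_iff_eq_mul₀ ht.ne'] at h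
  rw [h, show p+q-1 = ((p-1)+(q-1))+1 by ring, Real.rpow_add_one ht.ne', Real.rpow_add ht]
  ring
end P3
section P4

lemma continuous_rpow_const' {α : ℝ} (hα : 0 < α) : Continuous (fun x : ℝ => x ^ α) := by
  rw [continuous_iff_continuousAt]
  intro x
  exact Real.continuousAt_rpow_const x α (Or.inr hα.le)

lemma integrable_rpow_kernel {α t : ℝ} (hα : 0 < α) (ht : 0 < t) (g : ℝ → ℝ)
    (hg : Continuous g) :
    IntervalIntegrable (fun τ => g τ * (t-τ)^(α-1)) MeasureTheory.volume 0 t := by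
  have h0 : IntervalIntegrable (fun x : ℝ => x^(α-1)) MeasureTheory.volume 0 t :=
    intervalIntegrable_rpow' (by linarith)
  have base := (h0.comp_sub_left t).symm
  simp only [sub_zero, sub_self] at base
  exact base.continuousOn_mul hg.continuousOn

lemma J_ioo {α t : ℝ} (hα : 0 < α) (ht : 0 < t) (j k : ℕ) :
    ∫ τ in Set.Ioo (0:ℝ) t, τ^(α*j) * (t-τ)^(α*k+α-1)
      = Real.Gamma (α*j+1) * Real.Gamma (α*k+α) / Real.Gamma (α*(j+k+1)+1) * t^(α*((j:ℝ)+k+1)) := by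
  have h := beta_scaled (p := α*j+1) (q := α*k+α) (by positivity) (by positivity) ht
  rw [intervalIntegral.integral_of_le ht.le, MeasureTheory.integral_Ioc_eq_integral_Ioo] at h
  rw [show α*(j:ℝ)+1+(α*k+α)-1 = α*((j:ℝ)+k+1) by ring] at h
  rw [show α*(j:ℝ)+1+(α*k+α) = α*((j:ℝ)+k+1)+1 by ring] at h
  rw [show α*(j:ℝ)+1-1 = α*(j:ℝ) by ring] at h
  exact h

lemma F_integrand_eq {α t : ℝ} (hα : 0 < α) (a b : ℝ) (j k : ℕ) {τ : ℝ}
    (hτ : τ ∈ Set.Ioo (0:ℝ) t) :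
    (a^j * (τ^α)^j / Real.Gamma (α*j+1)) * ((t-τ)^(α-1) * (b^k * ((t-τ)^α)^k / Real.Gamma (α*k+α)))
      = (a^j * b^k / (Real.Gamma (α*j+1) * Real.Gamma (α*k+α))) * (τ^(α*j) * (t-τ)^(α*k+α-1)) := by
  obtain ⟨h0, h1⟩ := hτ
  have hτα : (τ^α)^j = τ^(α*j) := by
    rw [← Real.rpow_natCast (τ^α) j, ← Real.rpow_mul h0.le]
  have hts : (0:ℝ) < t - τ := by linarith
  have h2 : ((t-τ)^α)^k = (t-τ)^(α*k) := by
    rw [← Real.rpow_natCast ((t-τ)^α) k, ← Real.rpow_mul hts.le]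
  have h3 : (t-τ)^(α-1) * (t-τ)^(α*k) = (t-τ)^(α*k+α-1) := by
    rw [← Real.rpow_add hts]; ring_nf
  rw [hτα, h2]
  have hΓ1 : Real.Gamma (α*j+1) ≠ 0 := (Real.Gamma_pos_of_pos (by positivity)).ne'
  have hΓ2 : Real.Gamma (α*k+α) ≠ 0 := (Real.Gamma_pos_of_pos (by positivity)).ne'
  field_simp
  rw [show α * ((k:ℝ) + 1) - 1 = α * k + α - 1 by ring, ← h3]; ring

lemma F_integrable {α t : ℝ} (hα : 0 < α) (ht : 0 < t) (a b : ℝ) (j k : ℕ) :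
    MeasureTheory.IntegrableOn
      (fun τ => (a^j * (τ^α)^j / Real.Gamma (α*j+1)) *
        ((t-τ)^(α-1) * (b^k * ((t-τ)^α)^k / Real.Gamma (α*k+α))))
      (Set.Ioo (0:ℝ) t) MeasureTheory.volume := by
  have hg : Continuous (fun τ : ℝ => (a^j * (τ^α)^j / Real.Gamma (α*j+1)) *
      (b^k * ((t-τ)^α)^k / Real.Gamma (α*k+α))) := by
    apply Continuous.mul
    · exact (continuous_const.mul ((continuous_rpow_const' hα).pow j)).div_const _
    · exact (continuous_const.mul (((continuous_rpow_const' hα).comp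
        (continuous_const.sub continuous_id)).pow k)).div_const _
  have h := integrable_rpow_kernel hα ht _ hg
  have heq : (fun τ : ℝ => (a^j * (τ^α)^j / Real.Gamma (α*j+1)) *
        ((t-τ)^(α-1) * (b^k * ((t-τ)^α)^k / Real.Gamma (α*k+α))))
      = (fun τ : ℝ => ((a^j * (τ^α)^j / Real.Gamma (α*j+1)) *
        (b^k * ((t-τ)^α)^k / Real.Gamma (α*k+α))) * (t-τ)^(α-1)) := by
    funext τ; ring
  rw [heq]
  have := (intervalIntegrable_iff_integrableOn_Ioc_of_le ht.le).1 h
  exact this.mono_set Set.Ioo_subset_Ioc_self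

lemma setIntegral_F {α t : ℝ} (hα : 0 < α) (ht : 0 < t) (a b : ℝ) (j k : ℕ) :
    ∫ τ in Set.Ioo (0:ℝ) t, (a^j * (τ^α)^j / Real.Gamma (α*j+1)) *
        ((t-τ)^(α-1) * (b^k * ((t-τ)^α)^k / Real.Gamma (α*k+α)))
      = a^j * b^k * t^(α*((j:ℝ)+k+1)) / Real.Gamma (α*(j+k+1)+1) := by
  rw [MeasureTheory.setIntegral_congr_fun measurableSet_Ioo
    (fun τ hτ => F_integrand_eq hα a b j k hτ)]
  rw [MeasureTheory.integral_const_mul, J_ioo hα ht j k]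
  have hΓ1 : Real.Gamma (α*j+1) ≠ 0 := (Real.Gamma_pos_of_pos (by positivity)).ne'
  have hΓ2 : Real.Gamma (α*k+α) ≠ 0 := (Real.Gamma_pos_of_pos (by positivity)).ne'
  have hΓ3 : Real.Gamma (α*((j:ℝ)+k+1)+1) ≠ 0 := by
    apply (Real.Gamma_pos_of_pos _).ne'
    have : (0:ℝ) ≤ (j:ℝ)+k := by positivity
    nlinarith
  field_simp
end P4
section P5

lemma summable_V {α t : ℝ} (hα : 0 < α) (ht : 0 < t) {c d : ℝ} (hc : 0 ≤ c) (hd : 0 ≤ d) :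
    Summable (fun p : ℕ × ℕ =>
      c^p.1 * d^p.2 * t^(α*((p.1:ℝ)+p.2+1)) / Real.Gamma (α*((p.1:ℝ)+p.2+1)+1)) := by
  set W : ℕ × ℕ → ℝ := fun p =>
    c^p.1 * d^p.2 * t^(α*((p.1:ℝ)+p.2+1)) / Real.Gamma (α*((p.1:ℝ)+p.2+1)+1) with hW
  have hWnn : ∀ p : ℕ × ℕ, 0 ≤ W p := by
    intro p
    apply div_nonneg _ (Real.Gamma_pos_of_pos (by positivity)).le
    positivity
  rw [← (Finset.HasAntidiagonal.sigmaAntidiagonalEquivProd (A := ℕ)).summable_iff]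
  set K := max c d with hK
  have hK0 : 0 ≤ K := le_trans hc (le_max_left _ _)
  refine (summable_sigma_of_nonneg (fun x => hWnn _)).2 ⟨fun n => Summable.of_finite, ?_⟩
  apply Summable.of_nonneg_of_le (fun n => tsum_nonneg (fun y => hWnn _))
    _ ((summable_ml_master hα (by linarith : (0:ℝ) < α + 1)
        (M := K * t^α) (by positivity)).mul_left (t^α))
  intro n
  have hsub : ∀ i : {x // x ∈ Finset.HasAntidiagonal.antidiagonal n},
      W (Finset.HasAntidiagonal.sigmaAntidiagonalEquivProd ⟨n, i⟩) = W (i : ℕ × ℕ) := fun i => rfl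
  rw [tsum_congr hsub, Finset.tsum_subtype (Finset.HasAntidiagonal.antidiagonal n) W]
  have hpow : t^(α*((n:ℝ)+1)) = (t^α)^(n+1) := by
    rw [← Real.rpow_natCast (t^α) (n+1), ← Real.rpow_mul ht.le]
    push_cast; ring_nf
  have hterm : ∀ p ∈ Finset.HasAntidiagonal.antidiagonal n, W p ≤ K^n * t^(α*((n:ℝ)+1)) / Real.Gamma (α*((n:ℝ)+1)+1) := by
    intro p hp
    have hpn : p.1 + p.2 = n := Finset.HasAntidiagonal.mem_antidiagonal.1 hp
    have hcast : (p.1:ℝ) + p.2 + 1 = (n:ℝ) + 1 := by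
      have : ((p.1 + p.2 : ℕ):ℝ) = (n:ℝ) := by rw [hpn]
      push_cast at this; linarith
    have hΓ : (0:ℝ) < Real.Gamma (α*((n:ℝ)+1)+1) := Real.Gamma_pos_of_pos (by positivity)
    rw [hW]
    dsimp only
    rw [hcast]
    have hcd : c^p.1*d^p.2 ≤ K^n := by
      calc c^p.1*d^p.2 ≤ K^p.1 * K^p.2 := by
            apply mul_le_mul (pow_le_pow_left₀ hc (le_max_left c d) _)
              (pow_le_pow_left₀ hd (le_max_right c d) _) (by positivity) (by positivity)
        _ = K^(p.1+p.2) := (pow_add K p.1 p.2).symm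
        _ = K^n := by rw [hpn]
    exact div_le_div₀ (mul_nonneg (pow_nonneg hK0 n) (Real.rpow_nonneg ht.le _))
      (mul_le_mul_of_nonneg_right hcd (Real.rpow_nonneg ht.le _)) hΓ le_rfl
  have hsum : ∑ p ∈ Finset.HasAntidiagonal.antidiagonal n, W p
      ≤ ((n:ℝ)+1) * (K^n * t^(α*((n:ℝ)+1)) / Real.Gamma (α*((n:ℝ)+1)+1)) := by
    have h1 := Finset.sum_le_card_nsmul (Finset.HasAntidiagonal.antidiagonal n) W _ hterm
    rw [Finset.Nat.card_antidiagonal] at h1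
    have : ((n+1 : ℕ) : ℝ) = (n:ℝ)+1 := by push_cast; ring
    calc ∑ p ∈ Finset.HasAntidiagonal.antidiagonal n, W p
        ≤ (n+1 : ℕ) • (K^n * t^(α*((n:ℝ)+1)) / Real.Gamma (α*((n:ℝ)+1)+1)) := h1
      _ = ((n:ℝ)+1) * (K^n * t^(α*((n:ℝ)+1)) / Real.Gamma (α*((n:ℝ)+1)+1)) := by
          rw [nsmul_eq_mul]; push_cast; ring
  apply hsum.trans
  have hΓeq : α*((n:ℝ)+1)+1 = α*n+(α+1) := by ring
  rw [hpow, hΓeq]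
  have : (K * t^α)^n = K^n * (t^α)^n := mul_pow _ _ _
  rw [pow_succ]
  rw [this]
  ring_nf
  apply le_of_eq
  ring
end P5
section P6

lemma conv_ml {α t : ℝ} (hα : 0 < α) (ht : 0 < t) (a b : ℝ) (hab : a ≠ b) :
    ∫ τ in (0:ℝ)..t, mlE α 1 (a * τ^α) * ((t-τ)^(α-1) * mlE α α (b * (t-τ)^α)) =
      (mlE α 1 (a * t^α) - mlE α 1 (b * t^α)) / (a-b) := by
  set F : ℕ × ℕ → ℝ → ℝ := fun p τ =>
    (a^p.1 * (τ^α)^p.1 / Real.Gamma (α*p.1+1)) *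
      ((t-τ)^(α-1) * (b^p.2 * ((t-τ)^α)^p.2 / Real.Gamma (α*p.2+α))) with hF
  -- pointwise expansion on Ioo
  have hpt : ∀ τ ∈ Set.Ioo (0:ℝ) t,
      mlE α 1 (a * τ^α) * ((t-τ)^(α-1) * mlE α α (b * (t-τ)^α)) = ∑' p : ℕ × ℕ, F p τ := by
    intro τ hτ
    have e1 : mlE α 1 (a * τ^α) = ∑' j : ℕ, a^j * (τ^α)^j / Real.Gamma (α*j+1) := by
      rw [mlE]; exact tsum_congr (fun j => by rw [mul_pow])
    have e2 : (t-τ)^(α-1) * mlE α α (b * (t-τ)^α)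
        = ∑' k : ℕ, (t-τ)^(α-1) * (b^k * ((t-τ)^α)^k / Real.Gamma (α*k+α)) := by
      rw [mlE, ← tsum_mul_left]
      exact tsum_congr (fun k => by rw [mul_pow])
    have hs1 : Summable fun j : ℕ => ‖a^j * (τ^α)^j / Real.Gamma (α*j+1)‖ := by
      apply (summable_norm_mlE hα one_pos (a * τ^α)).congr
      intro j; rw [mul_pow]
    have hs2 : Summable fun k : ℕ =>
        ‖(t-τ)^(α-1) * (b^k * ((t-τ)^α)^k / Real.Gamma (α*k+α))‖ := by
      apply ((summable_norm_mlE hα hα (b * (t-τ)^α)).mul_left ‖(t-τ)^(α-1)‖).congr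
      intro k; rw [mul_pow, norm_mul]
    rw [e1, e2, tsum_mul_tsum_of_summable_norm hs1 hs2]
  rw [intervalIntegral.integral_of_le ht.le, MeasureTheory.integral_Ioc_eq_integral_Ioo,
    MeasureTheory.setIntegral_congr_fun measurableSet_Ioo hpt]
  -- measurability
  have hmeas : ∀ p : ℕ × ℕ, MeasureTheory.AEStronglyMeasurable (F p)
      (MeasureTheory.volume.restrict (Set.Ioo (0:ℝ) t)) := by
    intro p
    have : Measurable (F p) := by rw [hF]; fun_prop
    exact this.aestronglyMeasurable
  -- norm integrals
  have hnormint : ∀ p : ℕ × ℕ, (∫ τ in Set.Ioo (0:ℝ) t, ‖F p τ‖)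
      = |a|^p.1 * |b|^p.2 * t^(α*((p.1:ℝ)+p.2+1)) / Real.Gamma (α*((p.1:ℝ)+p.2+1)+1) := by
    intro p
    rw [← setIntegral_F hα ht |a| |b| p.1 p.2]
    apply MeasureTheory.setIntegral_congr_fun measurableSet_Ioo
    intro τ hτ
    obtain ⟨h0, h1⟩ := hτ
    have hts : (0:ℝ) < t - τ := by linarith
    have hΓ1 : (0:ℝ) < Real.Gamma (α*p.1+1) := Real.Gamma_pos_of_pos (by positivity)
    have hΓ2 : (0:ℝ) < Real.Gamma (α*p.2+α) := Real.Gamma_pos_of_pos (by positivity)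
    dsimp only
    rw [hF]
    dsimp only
    rw [Real.norm_eq_abs, abs_mul, abs_mul, abs_div, abs_div, abs_mul, abs_mul,
      abs_pow, abs_pow, abs_pow, abs_pow, abs_of_pos hΓ1, abs_of_pos hΓ2,
      abs_of_nonneg (Real.rpow_nonneg h0.le α), abs_of_nonneg (Real.rpow_nonneg hts.le α),
      abs_of_nonneg (Real.rpow_nonneg hts.le (α-1))]
  -- the lintegral condition
  have hcond : (∑' p : ℕ × ℕ, ∫⁻ τ, ‖F p τ‖₊
      ∂(MeasureTheory.volume.restrict (Set.Ioo (0:ℝ) t))) ≠ ⊤ := by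
    have heq : ∀ p : ℕ × ℕ, (∫⁻ τ, ‖F p τ‖₊
        ∂(MeasureTheory.volume.restrict (Set.Ioo (0:ℝ) t)))
        = ENNReal.ofReal (|a|^p.1 * |b|^p.2 * t^(α*((p.1:ℝ)+p.2+1))
            / Real.Gamma (α*((p.1:ℝ)+p.2+1)+1)) := by
      intro p
      simp only [← enorm_eq_nnnorm]
      rw [← MeasureTheory.ofReal_integral_norm_eq_lintegral_enorm (F_integrable hα ht a b p.1 p.2)]
      rw [← hnormint p]
    rw [tsum_congr heq]
    have hnn : ∀ p : ℕ × ℕ, 0 ≤ |a|^p.1 * |b|^p.2 * t^(α*((p.1:ℝ)+p.2+1))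
        / Real.Gamma (α*((p.1:ℝ)+p.2+1)+1) := by
      intro p
      apply div_nonneg (by positivity) (Real.Gamma_pos_of_pos (by positivity)).le
    rw [← ENNReal.ofReal_tsum_of_nonneg hnn (summable_V hα ht (abs_nonneg a) (abs_nonneg b))]
    exact ENNReal.ofReal_ne_top
  rw [MeasureTheory.integral_tsum hmeas hcond]
  rw [tsum_congr (fun p : ℕ × ℕ => setIntegral_F hα ht a b p.1 p.2)]
  -- now the pure series computation
  set V : ℕ × ℕ → ℝ := fun p =>
    a^p.1 * b^p.2 * t^(α*((p.1:ℝ)+p.2+1)) / Real.Gamma (α*((p.1:ℝ)+p.2+1)+1) with hV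
  have hVsum : Summable V := by
    apply Summable.of_norm_bounded (summable_V hα ht (abs_nonneg a) (abs_nonneg b))
    intro p
    have hΓ : (0:ℝ) < Real.Gamma (α*((p.1:ℝ)+p.2+1)+1) := Real.Gamma_pos_of_pos (by positivity)
    rw [hV]
    dsimp only
    rw [Real.norm_eq_abs, abs_div, abs_mul, abs_mul, abs_pow, abs_pow, abs_of_pos hΓ,
      abs_of_nonneg (Real.rpow_nonneg ht.le _)]
  have hab' : a - b ≠ 0 := sub_ne_zero.2 hab
  -- reduce to sigma sums
  rw [← (Finset.HasAntidiagonal.sigmaAntidiagonalEquivProd (A := ℕ)).tsum_eq V,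
    Summable.tsum_sigma (show Summable (fun c : (Σ n : ℕ, {x // x ∈ Finset.HasAntidiagonal.antidiagonal n}) =>
      V (Finset.HasAntidiagonal.sigmaAntidiagonalEquivProd c)) from
      (Finset.HasAntidiagonal.sigmaAntidiagonalEquivProd (A := ℕ)).summable_iff.2 hVsum)]
  have hfib : ∀ n : ℕ, (∑' c : {p // p ∈ Finset.HasAntidiagonal.antidiagonal n},
      V (Finset.HasAntidiagonal.sigmaAntidiagonalEquivProd ⟨n, c⟩))
      = (a^(n+1) - b^(n+1)) / (a-b) * (t^(α*((n:ℝ)+1)) / Real.Gamma (α*((n:ℝ)+1)+1)) := by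
    intro n
    have h1 : ∀ c : {p // p ∈ Finset.HasAntidiagonal.antidiagonal n},
        V (Finset.HasAntidiagonal.sigmaAntidiagonalEquivProd ⟨n, c⟩) = V (c : ℕ × ℕ) := fun c => rfl
    rw [tsum_congr h1, Finset.tsum_subtype (Finset.HasAntidiagonal.antidiagonal n) V]
    have h2 : ∀ p ∈ Finset.HasAntidiagonal.antidiagonal n,
        V p = a^p.1 * b^p.2 * (t^(α*((n:ℝ)+1)) / Real.Gamma (α*((n:ℝ)+1)+1)) := by
      intro p hp
      have hpn : p.1 + p.2 = n := Finset.HasAntidiagonal.mem_antidiagonal.1 hp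
      have hcast : (p.1:ℝ) + p.2 + 1 = (n:ℝ) + 1 := by
        have : ((p.1 + p.2 : ℕ):ℝ) = (n:ℝ) := by rw [hpn]
        push_cast at this; linarith
      rw [hV]
      dsimp only
      rw [hcast]
      ring
    rw [Finset.sum_congr rfl h2, ← Finset.sum_mul]
    have h3 : ∑ p ∈ Finset.HasAntidiagonal.antidiagonal n, a^p.1 * b^p.2 = (a^(n+1) - b^(n+1)) / (a-b) := by
      rw [Finset.Nat.sum_antidiagonal_eq_sum_range_succ_mk (fun p => a^p.1 * b^p.2) n]
      rw [eq_div_iff hab']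
      have := geom_sum₂_mul a b (n+1)
      simp only [Nat.add_sub_cancel] at this
      exact this
    rw [h3]
  rw [tsum_congr hfib]
  -- expand mlE at t
  have hpowt : ∀ n : ℕ, (t^α)^(n+1) = t^(α*((n:ℝ)+1)) := by
    intro n
    rw [← Real.rpow_natCast (t^α) (n+1), ← Real.rpow_mul ht.le]
    push_cast; ring_nf
  have hshift : ∀ z : ℝ, mlE α 1 (z * t^α)
      = 1 + ∑' n : ℕ, z^(n+1) * t^(α*((n:ℝ)+1)) / Real.Gamma (α*((n:ℝ)+1)+1) := by
    intro z
    rw [mlE, Summable.tsum_eq_zero_add (summable_mlE hα one_pos (z * t^α))]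
    congr 1
    · norm_num [Real.Gamma_one]
    · apply tsum_congr
      intro n
      rw [mul_pow, hpowt n]
      have : α * ((n+1 : ℕ):ℝ) + 1 = α*((n:ℝ)+1)+1 := by push_cast; ring
      rw [this]
  have hsummand : ∀ z : ℝ, Summable (fun n : ℕ =>
      z^(n+1) * t^(α*((n:ℝ)+1)) / Real.Gamma (α*((n:ℝ)+1)+1)) := by
    intro z
    have h0 : Summable (fun n : ℕ => (z * t^α)^n / Real.Gamma (α*n+1)) :=
      summable_mlE hα one_pos (z * t^α)
    have h1 := (summable_nat_add_iff 1).2 h0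
    apply h1.congr
    intro n
    rw [mul_pow, hpowt n]
    have : α * ((n+1 : ℕ):ℝ) + 1 = α*((n:ℝ)+1)+1 := by push_cast; ring
    rw [this]
  rw [hshift a, hshift b]
  have hstep : ∀ n : ℕ, (a^(n+1) - b^(n+1)) / (a-b)
        * (t^(α*((n:ℝ)+1)) / Real.Gamma (α*((n:ℝ)+1)+1))
      = (a^(n+1) * t^(α*((n:ℝ)+1)) / Real.Gamma (α*((n:ℝ)+1)+1)
        - b^(n+1) * t^(α*((n:ℝ)+1)) / Real.Gamma (α*((n:ℝ)+1)+1)) * (a-b)⁻¹ := by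
    intro n; field_simp
  rw [tsum_congr hstep, tsum_mul_right, Summable.tsum_sub (hsummand a) (hsummand b)]
  field_simp
  ring
end P6
section P7

lemma integrable_u {α t : ℝ} (hα : 0 < α) (ht : 0 < t) (b : ℝ) (f : ℝ → ℝ)
    (hf : Continuous f) :
    IntervalIntegrable (fun τ => f τ * ((t-τ)^(α-1) * mlE α α (b * (t-τ)^α)))
      MeasureTheory.volume 0 t := by
  have hg : Continuous (fun τ : ℝ => f τ * mlE α α (b * (t-τ)^α)) :=
    hf.mul ((mlE_continuous hα hα).comp (continuous_const.mul
      ((continuous_rpow_const' hα).comp (continuous_const.sub continuous_id))))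
  have heq : (fun τ => f τ * ((t-τ)^(α-1) * mlE α α (b * (t-τ)^α)))
      = fun τ => (f τ * mlE α α (b * (t-τ)^α)) * (t-τ)^(α-1) := by
    funext τ; ring
  rw [heq]
  exact integrable_rpow_kernel hα ht _ hg

end P7

theorem convolution_closed_form (α lam : ℝ) (i : ℕ) (hα : 0 < α) (hα1 : α ≤ 1)
    (hlam : 1 < lam ^ 2) (hi : 1 ≤ i)
    (hne : (2 * π * i : ℝ) ≠ lam)
    (hμ : ((2 * π * i : ℝ) ^ 2 - lam ^ 2 + 1) ≠ 0) :
    let lami : ℝ := 2 * π * i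
    let μ : ℝ := lami ^ 2 - lam ^ 2 + 1
    let w : ℝ → ℝ := fun t => (lam ^ 2 - mlE α 1 ((1 - lam ^ 2) * t ^ α)) / (lam ^ 2 - 1)
    ∀ t : ℝ, 0 < t →
      ∫ τ in (0:ℝ)..t, w τ * ((t - τ) ^ (α - 1) * mlE α α (-lami ^ 2 * (t - τ) ^ α)) =
        μ⁻¹ * (mlE α 1 ((1 - lam ^ 2) * t ^ α) / (1 - lam ^ 2) * (1 - lam ^ 2)
          + lam ^ 2 * t ^ α * mlE α (α + 1) ((1 - lam ^ 2) * t ^ α)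
          - mlE α 1 (-lami ^ 2 * t ^ α)
          - lam ^ 2 * t ^ α * mlE α (α + 1) (-lami ^ 2 * t ^ α)) := by
  intro lami μ w t ht
  have hlamidef : lami = 2 * π * i := rfl
  have hμdef : μ = lami ^ 2 - lam ^ 2 + 1 := rfl
  have hwdef : w = fun t => (lam ^ 2 - mlE α 1 ((1 - lam ^ 2) * t ^ α)) / (lam ^ 2 - 1) := rfl
  clear_value lami μ w
  have hπ := Real.pi_pos
  have hi1 : (1:ℝ) ≤ (i:ℝ) := by exact_mod_cast hi
  have hlami : 0 < lami := by rw [hlamidef]; nlinarith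
  have hl1 : lam ^ 2 - 1 ≠ 0 := by intro h; nlinarith
  have ha : (1 - lam ^ 2 : ℝ) ≠ 0 := by intro h; nlinarith
  have hb : (-lami ^ 2 : ℝ) ≠ 0 := by nlinarith
  have h0b : (0:ℝ) ≠ -lami ^ 2 := by nlinarith
  have hab : (1 - lam ^ 2 : ℝ) ≠ -lami ^ 2 := by
    intro h
    apply hμ
    rw [hlamidef] at h
    nlinarith
  -- split the integrand
  have hml0 : ∀ τ : ℝ, mlE α 1 (0 * τ ^ α) = 1 := by
    intro τ; rw [zero_mul]; exact mlE_zero hα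
  have hw : (fun τ => w τ * ((t - τ) ^ (α - 1) * mlE α α (-lami ^ 2 * (t - τ) ^ α)))
      = fun τ => (lam ^ 2 / (lam ^ 2 - 1)) *
          (mlE α 1 (0 * τ ^ α) * ((t - τ) ^ (α - 1) * mlE α α (-lami ^ 2 * (t - τ) ^ α)))
        - (1 / (lam ^ 2 - 1)) *
          (mlE α 1 ((1 - lam ^ 2) * τ ^ α) * ((t - τ) ^ (α - 1) * mlE α α (-lami ^ 2 * (t - τ) ^ α))) := by
    funext τ
    rw [hwdef, hml0 τ]
    field_simp
  rw [hw]
  have hint0 : IntervalIntegrable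
      (fun τ => mlE α 1 (0 * τ ^ α) * ((t - τ) ^ (α - 1) * mlE α α (-lami ^ 2 * (t - τ) ^ α)))
      MeasureTheory.volume 0 t :=
    integrable_u hα ht _ _ ((mlE_continuous hα one_pos).comp
      (continuous_const.mul (continuous_rpow_const' hα)))
  have hinta : IntervalIntegrable
      (fun τ => mlE α 1 ((1 - lam ^ 2) * τ ^ α) * ((t - τ) ^ (α - 1) * mlE α α (-lami ^ 2 * (t - τ) ^ α)))
      MeasureTheory.volume 0 t :=
    integrable_u hα ht _ _ ((mlE_continuous hα one_pos).comp
      (continuous_const.mul (continuous_rpow_const' hα)))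
  rw [intervalIntegral.integral_sub (hint0.const_mul _) (hinta.const_mul _),
    intervalIntegral.integral_const_mul, intervalIntegral.integral_const_mul,
    conv_ml hα ht 0 (-lami ^ 2) h0b, conv_ml hα ht (1 - lam ^ 2) (-lami ^ 2) hab,
    hml0 t]
  -- algebra
  have htα : (0:ℝ) < t ^ α := Real.rpow_pos_of_pos ht α
  set EA := mlE α 1 ((1 - lam ^ 2) * t ^ α) with hEA
  set EB := mlE α 1 (-lami ^ 2 * t ^ α) with hEB
  set MA := mlE α (α + 1) ((1 - lam ^ 2) * t ^ α) with hMA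
  set MB := mlE α (α + 1) (-lami ^ 2 * t ^ α) with hMB
  have r1 : ((1 - lam ^ 2) * t ^ α) * MA = EA - 1 := mlE_shift hα _
  have r2 : ((-lami ^ 2) * t ^ α) * MB = EB - 1 := mlE_shift hα _
  have hMAv : MA = (EA - 1) / ((1 - lam ^ 2) * t ^ α) := by
    rw [eq_div_iff (mul_ne_zero ha htα.ne')]
    linarith [r1]
  have hMBv : MB = (EB - 1) / ((-lami ^ 2) * t ^ α) := by
    rw [eq_div_iff (mul_ne_zero hb htα.ne')]
    linarith [r2]
  rw [hMAv, hMBv, hμdef]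
  have hμ' : lami ^ 2 - lam ^ 2 + 1 ≠ 0 := by
    rw [hlamidef]; exact hμ
  have hP : (lami:ℝ) ^ 2 ≠ 0 := pow_ne_zero 2 hlami.ne'
  rw [show (0:ℝ) - -lami ^ 2 = lami ^ 2 from by ring,
    show (1 - lam ^ 2) - -lami ^ 2 = lami ^ 2 - lam ^ 2 + 1 from by ring]
  field_simp
  ring
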